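/- In the multivariate polynomial ring ℂ[e₁,…,e_N, f₁,…,f_N, Z_{ij} (1 ≤ i ≤ j ≤ N)], let Z denote the symmetric N×N matrix of variables (Z_{ji} := Z_{ij}), let adj(Z) be its adjugate matrix, and let e, f be the column vectors of the e- and f-variables. Then det(Z) divides the polynomial (eᵀ·adj(Z)·f)² − (eᵀ·adj(Z)·e)·(fᵀ·adj(Z)·f). Equivalently, det(Z)·( eᵀ(eᵀZ^{-1}f)Z^{-1}f − (eᵀZ^{-1}e)(fᵀZ^{-1}f) ) is a polynomial of degree N+2. -/

import Mathlib

open Matrix MvPolynomial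

noncomputable section

/-- Variables: `e₁,…,e_N`, `f₁,…,f_N`, and `Z_{ij}` for pairs `(i,j)`. -/
abbrev JVar (N : ℕ) := Fin N ⊕ (Fin N ⊕ (Fin N × Fin N))

/-- The vector of variables `e`. -/
def eVec (N : ℕ) : Fin N → MvPolynomial (JVar N) ℂ := fun i => X (Sum.inl i)

/-- The vector of variables `f`. -/
def fVec (N : ℕ) : Fin N → MvPolynomial (JVar N) ℂ := fun i => X (Sum.inr (Sum.inl i))

/-- The symmetric matrix of variables `Z` (with `Z_{ji} = Z_{ij}` for `i ≤ j`). -/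
def Zmat (N : ℕ) : Matrix (Fin N) (Fin N) (MvPolynomial (JVar N) ℂ) :=
  Matrix.of fun i j => if i ≤ j then X (Sum.inr (Sum.inr (i, j))) else X (Sum.inr (Sum.inr (j, i)))


lemma coeff11 {R : Type*} [CommRing R] (d x y z w : R) (P : Polynomial (Polynomial R))
    (h : Polynomial.C (Polynomial.C d) * P
      = Polynomial.C (Polynomial.C x + Polynomial.X * Polynomial.C y)
        + Polynomial.X * Polynomial.C (Polynomial.C z + Polynomial.X * Polynomial.C w)) :
    d * (P.coeff 1).coeff 1 = w := by
  have h1 := congrArg (fun p : Polynomial (Polynomial R) => p.coeff 1) h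
  simp only [Polynomial.coeff_C_mul, Polynomial.coeff_add, Polynomial.coeff_C, one_ne_zero, if_false, zero_add] at h1
  rw [show (1:ℕ) = 0 + 1 from rfl, Polynomial.coeff_X_mul, Polynomial.coeff_C_zero] at h1
  have h2 := congrArg (fun p : Polynomial R => p.coeff 1) h1
  simp only [Polynomial.coeff_C_mul, Polynomial.coeff_add, Polynomial.coeff_C, one_ne_zero, if_false, zero_add] at h2
  rw [show (1:ℕ) = 0 + 1 from rfl, Polynomial.coeff_X_mul, Polynomial.coeff_C_zero] at h2
  exact h2

set_option maxHeartbeats 1000000 in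
lemma key_det_dvd {R : Type*} [CommRing R] [IsDomain R] {n : Type*} [Fintype n] [DecidableEq n]
    (A : Matrix n n R) (hA : A.det ≠ 0) (e f : n → R) :
    A.det ∣ (e ⬝ᵥ A.adjugate *ᵥ f) * (f ⬝ᵥ A.adjugate *ᵥ e)
      - (e ⬝ᵥ A.adjugate *ᵥ e) * (f ⬝ᵥ A.adjugate *ᵥ f) := by
  classical
  set a := e ⬝ᵥ A.adjugate *ᵥ e with ha
  set b := e ⬝ᵥ A.adjugate *ᵥ f with hb
  set b' := f ⬝ᵥ A.adjugate *ᵥ e with hb'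
  set c := f ⬝ᵥ A.adjugate *ᵥ f with hc
  let T := Polynomial (Polynomial R)
  let ι : R →+* T := Polynomial.C.comp Polynomial.C
  let L := FractionRing T
  let φ : T →+* L := algebraMap T L
  let ψ : R →+* L := φ.comp ι
  have hφinj : Function.Injective φ := IsFractionRing.injective T L
  have hψinj : Function.Injective ψ :=
    hφinj.comp (Polynomial.C_injective.comp Polynomial.C_injective)
  let s : T := Polynomial.C Polynomial.X
  let t : T := Polynomial.X
  let M : Matrix n n T := Matrix.of fun i j =>
    ι (A i j) + s * ι (e i) * ι (f j) + t * ι (f i) * ι (e j)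
  let B' : Matrix n n L := A.adjugate.map ψ
  let U : Matrix n (Fin 2) L := Matrix.of fun i k => if k = 0 then φ s * ψ (e i) else φ t * ψ (f i)
  let V : Matrix (Fin 2) n L := Matrix.of fun k j => if k = 0 then ψ (f j) else ψ (e j)
  have hdot : ∀ (v w : n → R), (fun i => ψ (v i)) ⬝ᵥ (A.adjugate.map ψ) *ᵥ (fun i => ψ (w i))
      = ψ (v ⬝ᵥ A.adjugate *ᵥ w) := by
    intro v w
    simp [dotProduct, Matrix.mulVec, map_sum, _root_.map_mul]
  have hdet' : (A.map ψ).det = ψ A.det := by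
    rw [RingHom.map_det]; rfl
  have hδ : ψ A.det ≠ 0 := fun h0 => hA (hψinj (by simpa using h0))
  have hUnit : IsUnit (A.map ψ).det := by rw [hdet']; exact isUnit_iff_ne_zero.mpr hδ
  have hinv : (A.map ψ)⁻¹ = (ψ A.det)⁻¹ • B' := by
    rw [Matrix.inv_def, hdet', Ring.inverse_eq_inv']
    congr 1
    rw [show B' = RingHom.mapMatrix ψ A.adjugate from rfl, RingHom.map_adjugate]
    rfl
  have hMap : M.map φ = A.map ψ + U * V := by
    ext i j
    simp [M, U, V, Matrix.mul_apply, Fin.sum_univ_two, map_add, _root_.map_mul, ψ]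
    ring
  have h00 : (V * B' * U) 0 0 = φ s * ψ b' := by
    rw [hb', ← hdot f e, dotProduct_mulVec]
    simp only [Matrix.mul_apply, Matrix.of_apply, U, V, B', dotProduct, Matrix.vecMul,
      Fin.isValue, if_true, if_false, one_ne_zero, reduceIte]
    rw [Finset.mul_sum]
    refine Finset.sum_congr rfl fun j _ => ?_
    ring
  have h01 : (V * B' * U) 0 1 = φ t * ψ c := by
    rw [hc, ← hdot f f, dotProduct_mulVec]
    simp only [Matrix.mul_apply, Matrix.of_apply, U, V, B', dotProduct, Matrix.vecMul,
      Fin.isValue, if_true, if_false, one_ne_zero, reduceIte]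
    rw [Finset.mul_sum]
    refine Finset.sum_congr rfl fun j _ => ?_
    ring
  have h10 : (V * B' * U) 1 0 = φ s * ψ a := by
    rw [ha, ← hdot e e, dotProduct_mulVec]
    simp only [Matrix.mul_apply, Matrix.of_apply, U, V, B', dotProduct, Matrix.vecMul,
      Fin.isValue, if_true, if_false, one_ne_zero, reduceIte]
    rw [Finset.mul_sum]
    refine Finset.sum_congr rfl fun j _ => ?_
    ring
  have h11 : (V * B' * U) 1 1 = φ t * ψ b := by
    rw [hb, ← hdot e f, dotProduct_mulVec]
    simp only [Matrix.mul_apply, Matrix.of_apply, U, V, B', dotProduct, Matrix.vecMul,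
      Fin.isValue, if_true, if_false, one_ne_zero, reduceIte]
    rw [Finset.mul_sum]
    refine Finset.sum_congr rfl fun j _ => ?_
    ring
  have main : Polynomial.C (Polynomial.C A.det) * M.det
      = Polynomial.C (Polynomial.C (A.det * A.det) + Polynomial.X * Polynomial.C (b' * A.det))
        + Polynomial.X * Polynomial.C (Polynomial.C (b * A.det)
            + Polynomial.X * Polynomial.C (b * b' - a * c)) := by
    apply hφinj
    have hMdet : φ M.det = (A.map ψ + U * V).det := by
      rw [RingHom.map_det, RingHom.mapMatrix_apply, hMap]
    rw [_root_.map_mul, hMdet, Matrix.det_add_mul U V hUnit, hinv, hdet',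
      Matrix.mul_smul, Matrix.smul_mul, Matrix.det_fin_two]
    simp only [Matrix.add_apply, Matrix.smul_apply, Matrix.one_apply, smul_eq_mul,
      h00, h01, h10, h11, if_pos, reduceIte, if_neg, one_ne_zero]
    have e1 : φ (Polynomial.C (Polynomial.C A.det)) = ψ A.det := rfl
    have e2 : ∀ x : R, φ (Polynomial.C (Polynomial.C x)) = ψ x := fun _ => rfl
    simp only [map_add, _root_.map_mul, map_sub, e2]
    have hone : ((1 : Matrix (Fin 2) (Fin 2) L) 0 1) = 0 := by simp
    rw [if_neg (show ¬(0:Fin 2) = 1 by decide)]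
    have hi : ψ A.det * (ψ A.det)⁻¹ = 1 := mul_inv_cancel₀ hδ
    change _ = _ + φ s * _ + φ t * (_ + φ s * _)
    linear_combination (ψ A.det * (φ s * ψ b') + ψ A.det * (φ t * ψ b) + (ψ A.det * (ψ A.det)⁻¹ + 1) * ((φ s * ψ b') * (φ t * ψ b) - (φ t * ψ c) * (φ s * ψ a))) * hi
  exact ⟨(M.det.coeff 1).coeff 1, (coeff11 A.det _ _ _ _ M.det main).symm⟩

/-- `det(Z)` divides `(eᵀ·adj(Z)·f)² − (eᵀ·adj(Z)·e)·(fᵀ·adj(Z)·f)` in the polynomial ring;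
equivalently, `det(Z)·(eᵀ(eᵀZ⁻¹f)Z⁻¹f − (eᵀZ⁻¹e)(fᵀZ⁻¹f))` is a polynomial. -/
theorem det_dvd_adjugate_quadratic (N : ℕ) :
    (Zmat N).det ∣
      (∑ i, ∑ j, eVec N i * (Zmat N).adjugate i j * fVec N j) ^ 2
        - (∑ i, ∑ j, eVec N i * (Zmat N).adjugate i j * eVec N j)
          * (∑ i, ∑ j, fVec N i * (Zmat N).adjugate i j * fVec N j) := by
  classical
  have hsum : ∀ (v w : Fin N → MvPolynomial (JVar N) ℂ),
      (∑ i, ∑ j, v i * (Zmat N).adjugate i j * w j) = v ⬝ᵥ (Zmat N).adjugate *ᵥ w := by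
    intro v w
    simp [dotProduct, Matrix.mulVec, Finset.mul_sum, mul_assoc]
  have hZT : (Zmat N)ᵀ = Zmat N := by
    apply Matrix.ext
    intro i j
    show Zmat N j i = Zmat N i j
    by_cases h1 : i ≤ j <;> by_cases h2 : j ≤ i
    · obtain rfl := le_antisymm h1 h2; rfl
    · simp [Zmat, h1, h2]
    · simp [Zmat, h1, h2]
    · exact absurd (le_total i j) (by simp [h1, h2])
  have hBT : ((Zmat N).adjugate)ᵀ = (Zmat N).adjugate := by
    rw [Matrix.adjugate_transpose, hZT]
  have hswap : (fVec N) ⬝ᵥ (Zmat N).adjugate *ᵥ (eVec N)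
      = (eVec N) ⬝ᵥ (Zmat N).adjugate *ᵥ (fVec N) := by
    have hadj : ∀ i j, (Zmat N).adjugate j i = (Zmat N).adjugate i j :=
      fun i j => congrFun (congrFun hBT i) j
    simp only [dotProduct, Matrix.mulVec, Finset.mul_sum]
    rw [Finset.sum_comm]
    exact Finset.sum_congr rfl fun i _ => Finset.sum_congr rfl fun j _ => by
      rw [hadj]; ring
  have hdet0 : (Zmat N).det ≠ 0 := by
    intro h0
    set g : JVar N → ℂ := fun v => match v with
      | Sum.inr (Sum.inr p) => if p.1 = p.2 then 1 else 0
      | _ => 0 with hg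
    have h2 : (Zmat N).map (MvPolynomial.aeval g) = (1 : Matrix (Fin N) (Fin N) ℂ) := by
      ext i j
      by_cases h1 : i ≤ j <;> by_cases h3 : j ≤ i
      · obtain rfl := le_antisymm h1 h3
        simp [Zmat, g, Matrix.one_apply]
      · have hne : i ≠ j := fun hh => h3 (hh ▸ le_refl i)
        simp [Zmat, g, h1, h3, Matrix.one_apply, hne, Ne.symm hne]
      · have hne : i ≠ j := fun hh => h1 (hh ▸ le_refl i)
        simp [Zmat, g, h1, h3, Matrix.one_apply, hne, Ne.symm hne]
      · exact absurd (le_total i j) (by simp [h1, h3])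
    have h1 : MvPolynomial.aeval g ((Zmat N).det) = ((Zmat N).map (MvPolynomial.aeval g)).det := by
      rw [AlgHom.map_det]; rfl
    rw [h0, h2, map_zero, Matrix.det_one] at h1
    exact zero_ne_one h1
  have key := key_det_dvd (Zmat N) hdet0 (eVec N) (fVec N)
  rw [hswap] at key
  rw [hsum, hsum, hsum, pow_two]
  exact key
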